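/- Under the same hypotheses, for pairwise distinct u, v, v' one has |⟨ξ(u,v), ξ(u,v')⟩ − m'| ≤ 4χ + 4χ²/m'. -/

import Mathlib

/-- Under the hypotheses `‖η(v)‖² = m'` and `|⟨η(u),η(v)⟩| ≤ χ ≤ m'/4` for
distinct vertices, for pairwise distinct `u, v, v'` one has
`|⟨ξ(u,v), ξ(u,v')⟩ − m'| ≤ 4χ + 4χ²/m'`. -/
theorem abs_inner_xi_xi_shared_sub_le {V : Type*} {E : Type*}
    [NormedAddCommGroup E] [InnerProductSpace ℝ E]
    (m' χ : ℝ) (hm : 0 < m') (hχ : χ ≤ m' / 4)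
    (η : V → E) (hnorm : ∀ v, ‖η v‖ ^ 2 = m')
    (hcross : ∀ u v : V, u ≠ v → |(inner ℝ (η u) (η v) : ℝ)| ≤ χ)
    (ξ : V → V → E)
    (hξ : ∀ u v : V, u ≠ v →
      ξ u v = (m' / (m' + (inner ℝ (η u) (η v) : ℝ))) • (η u + η v))
    (u v v' : V) (h1 : u ≠ v) (h2 : u ≠ v') (h3 : v ≠ v') :
    |(inner ℝ (ξ u v) (ξ u v') : ℝ) - m'| ≤ 4 * χ + 4 * χ ^ 2 / m' := by
  have hχ0 : 0 ≤ χ := le_trans (abs_nonneg _) (hcross u v h1)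
  set a : ℝ := inner ℝ (η u) (η v) with hA
  set b : ℝ := inner ℝ (η u) (η v') with hB
  set c : ℝ := inner ℝ (η v) (η v') with hC
  have ha : |a| ≤ χ := hcross u v h1
  have hb : |b| ≤ χ := hcross u v' h2
  have hc : |c| ≤ χ := hcross v v' h3
  have ha' := abs_le.mp ha
  have hb' := abs_le.mp hb
  have hc' := abs_le.mp hc
  have hda : 3/4 * m' ≤ m' + a := by nlinarith [ha'.1]
  have hdb : 3/4 * m' ≤ m' + b := by nlinarith [hb'.1]
  have hda0 : 0 < m' + a := by linarith
  have hdb0 : 0 < m' + b := by linarith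
  have hvu : (inner ℝ (η v) (η u) : ℝ) = a := by rw [hA, real_inner_comm]
  rw [hξ u v h1, hξ u v' h2, real_inner_smul_left, real_inner_smul_right,
    inner_add_left, inner_add_right, inner_add_right,
    real_inner_self_eq_norm_sq, ← hB, ← hC, hvu]
  rw [hnorm u, ← hA]
  have hkey : m' / (m' + a) * (m' / (m' + b) * (m' + b + (a + c))) - m'
      = m' * (m' * c - a * b) / ((m' + a) * (m' + b)) := by
    field_simp; ring
  rw [hkey, abs_div, abs_of_pos (mul_pos hda0 hdb0)]
  have hnum : |m' * (m' * c - a * b)| ≤ m' * (m' * χ + χ ^ 2) := by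
    rw [abs_mul, abs_of_pos hm]
    have hX : |m' * c - a * b| ≤ m' * χ + χ ^ 2 := by
      have h1 : |m' * c - a * b| ≤ |m' * c| + |a * b| := abs_sub _ _
      have h2 : |m' * c| = m' * |c| := by rw [abs_mul, abs_of_pos hm]
      have h3 : |a * b| ≤ χ * χ := by
        rw [abs_mul]; exact mul_le_mul ha hb (abs_nonneg b) hχ0
      nlinarith [mul_le_mul_of_nonneg_left hc hm.le]
    exact mul_le_mul_of_nonneg_left hX hm.le
  rw [div_le_iff₀ (mul_pos hda0 hdb0)]
  have hd0 : 0 ≤ 4 * χ + 4 * χ ^ 2 / m' := by positivity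
  have hP : 9/16 * (m' * m') ≤ (m' + a) * (m' + b) := by
    nlinarith [mul_le_mul hda hdb (by linarith) (by linarith : (0:ℝ) ≤ m' + a)]
  have h4' : 4 * χ ^ 2 / m' * (m' * m') = 4 * χ ^ 2 * m' := by
    field_simp
  nlinarith [hnum, mul_le_mul_of_nonneg_left hP hd0, h4',
    mul_nonneg hχ0 (mul_nonneg hm.le hm.le)]
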